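/- Let k ≥ 1 and n ≥ 2^k·(2k−1). Define the graph F_n on vertex set {1,...,n} where distinct x, y are adjacent if and only if (v₂(y) = v₂(x)+1 and x ≤ y) or (v₂(x) = v₂(y)+1 and y ≤ x). Define the graph B_k on vertex set {(i,j) | 0 ≤ i,j ≤ k−1} where (i,j) and (i',j') are adjacent if and only if (i' = i+1 and j ≤ j') or (i = i'+1 and j' ≤ j). Then the map (i,j) ↦ j·2^{k+1} + 2^{i+1} is an injection from the vertices of B_k into {1,...,n} under which (i,j) and (i',j') are adjacent in B_k if and only if their images are adjacent in F_n; hence B_k is an induced subgraph of F_n. -/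

import Mathlib

open SimpleGraph

/-- Vertices of the graph on `{1, …, n}`. -/
abbrev DVert (n : ℕ) := {i : ℕ // 1 ≤ i ∧ i ≤ n}

/-- The graph `F_n` on vertex set `{1, …, n}`: distinct `x`, `y` are adjacent iff
`(v₂(y) = v₂(x) + 1 ∧ x ≤ y)` or `(v₂(x) = v₂(y) + 1 ∧ y ≤ x)`, where `v₂` is the
2-adic valuation `padicValNat 2`. -/
def Fgraph (n : ℕ) : SimpleGraph (DVert n) :=
  SimpleGraph.fromRel (fun x y =>
    padicValNat 2 (y : ℕ) = padicValNat 2 (x : ℕ) + 1 ∧ (x : ℕ) ≤ (y : ℕ))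

/-- Vertices of the graph `B_k`: pairs `(i, j)` with `0 ≤ i, j ≤ k − 1`. -/
abbrev BVert (k : ℕ) := Fin k × Fin k

/-- The graph `B_k` on vertex set `{(i,j) | 0 ≤ i,j ≤ k−1}`: `(i,j)` and `(i',j')` are
adjacent iff `(i' = i+1 ∧ j ≤ j')` or `(i = i'+1 ∧ j' ≤ j)`. -/
def Bgraph (k : ℕ) : SimpleGraph (BVert k) :=
  SimpleGraph.fromRel (fun p q =>
    (q.1 : ℕ) = (p.1 : ℕ) + 1 ∧ (p.2 : ℕ) ≤ (q.2 : ℕ))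

lemma fval_eq (k i j : ℕ) (h : i < k) :
    j * 2 ^ (k+1) + 2 ^ (i+1) = 2 ^ (i+1) * (j * 2 ^ (k - i) + 1) := by
  have he : i + 1 + (k - i) = k + 1 := by omega
  rw [Nat.mul_add, mul_one, ← mul_assoc, mul_comm (2^(i+1)) j, mul_assoc, ← pow_add, he]

lemma val2 (k i j : ℕ) (h : i < k) :
    padicValNat 2 (j * 2 ^ (k+1) + 2 ^ (i+1)) = i + 1 := by
  haveI : Fact (Nat.Prime 2) := ⟨Nat.prime_two⟩
  rw [fval_eq k i j h, padicValNat.mul (by positivity) (by positivity),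
    padicValNat.prime_pow, padicValNat.eq_zero_of_not_dvd, add_zero]
  intro hdvd
  have h2 : (2:ℕ) ∣ j * 2^(k-i) := Dvd.dvd.mul_left (dvd_pow_self 2 (by omega)) j
  omega

/-- For `k ≥ 1` and `n ≥ 2^k·(2k−1)`, the map
`(i,j) ↦ j·2^(k+1) + 2^(i+1)` is an injection of the vertices of `B_k` into
`{1, …, n}` preserving adjacency and non-adjacency; hence `B_k` is an induced
subgraph of `F_n`. -/
theorem stmt12 (k n : ℕ) (hk : 1 ≤ k) (hn : 2 ^ k * (2 * k - 1) ≤ n) :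
    ∃ e : Bgraph k ↪g Fgraph n,
      ∀ p : BVert k,
        ((e p : DVert n) : ℕ) = (p.2 : ℕ) * 2 ^ (k + 1) + 2 ^ ((p.1 : ℕ) + 1) := by
  have hn' : 2 ^ k * (2 * k - 1) = (k - 1) * 2 ^ (k + 1) + 2 ^ k := by
    obtain ⟨m, rfl⟩ : ∃ m, k = m + 1 := ⟨k - 1, by omega⟩
    have h1 : 2 * (m + 1) - 1 = 2 * m + 1 := by omega
    have h2 : m + 1 - 1 = m := by omega
    rw [h1, h2, pow_succ]
    ring
  have hle : ∀ p : BVert k,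
      (p.2 : ℕ) * 2 ^ (k + 1) + 2 ^ ((p.1 : ℕ) + 1) ≤ n := by
    intro p
    have hj : (p.2 : ℕ) ≤ k - 1 := by have := p.2.2; omega
    have hi : (p.1 : ℕ) + 1 ≤ k := p.1.2
    calc (p.2 : ℕ) * 2 ^ (k + 1) + 2 ^ ((p.1 : ℕ) + 1)
        ≤ (k - 1) * 2 ^ (k + 1) + 2 ^ k :=
          add_le_add (Nat.mul_le_mul_right _ hj) (Nat.pow_le_pow_right (by norm_num) hi)
      _ = 2 ^ k * (2 * k - 1) := hn'.symm
      _ ≤ n := hn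
  set f : BVert k → DVert n := fun p =>
    ⟨(p.2 : ℕ) * 2 ^ (k + 1) + 2 ^ ((p.1 : ℕ) + 1),
      ⟨le_trans (Nat.one_le_two_pow) (Nat.le_add_left _ _), hle p⟩⟩ with hf
  have hval : ∀ p : BVert k, padicValNat 2 ((f p : DVert n) : ℕ) = (p.1 : ℕ) + 1 := by
    intro p
    exact val2 k _ _ p.1.2
  have hinj : Function.Injective f := by
    intro p q hpq
    have hv : ((f p : DVert n) : ℕ) = ((f q : DVert n) : ℕ) := by rw [hpq]
    have hi : (p.1 : ℕ) = (q.1 : ℕ) := by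
      have := hval p
      have := hval q
      have h3 : padicValNat 2 ((f p : DVert n) : ℕ) = padicValNat 2 ((f q : DVert n) : ℕ) := by
        rw [hv]
      omega
    have hvv : (p.2 : ℕ) * 2 ^ (k + 1) + 2 ^ ((p.1 : ℕ) + 1)
        = (q.2 : ℕ) * 2 ^ (k + 1) + 2 ^ ((q.1 : ℕ) + 1) := hv
    rw [hi] at hvv
    have hj : (p.2 : ℕ) = (q.2 : ℕ) := by
      have := Nat.eq_of_mul_eq_mul_right (Nat.pow_pos (by norm_num) : 0 < 2 ^ (k+1)) (by omega :
        (p.2 : ℕ) * 2 ^ (k + 1) = (q.2 : ℕ) * 2 ^ (k + 1))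
      exact this
    exact Prod.ext (Fin.ext hi) (Fin.ext hj)
  -- relation equivalence
  have hrel : ∀ p q : BVert k,
      (padicValNat 2 ((f q : DVert n) : ℕ) = padicValNat 2 ((f p : DVert n) : ℕ) + 1 ∧
        ((f p : DVert n) : ℕ) ≤ ((f q : DVert n) : ℕ)) ↔
      ((q.1 : ℕ) = (p.1 : ℕ) + 1 ∧ (p.2 : ℕ) ≤ (q.2 : ℕ)) := by
    intro p q
    rw [hval p, hval q]
    constructor
    · rintro ⟨h1, h2⟩
      refine ⟨by omega, ?_⟩
      by_contra hjj
      have hj : (q.2 : ℕ) + 1 ≤ (p.2 : ℕ) := by omega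
      have hik : (q.1 : ℕ) + 1 ≤ k := q.1.2
      have hq : ((f q : DVert n) : ℕ) < ((f p : DVert n) : ℕ) := by
        show (q.2 : ℕ) * 2 ^ (k + 1) + 2 ^ ((q.1 : ℕ) + 1)
          < (p.2 : ℕ) * 2 ^ (k + 1) + 2 ^ ((p.1 : ℕ) + 1)
        have hpw : 2 ^ ((q.1 : ℕ) + 1) < 2 ^ (k + 1) :=
          Nat.pow_lt_pow_right (by norm_num) (by omega)
        have : ((q.2 : ℕ) + 1) * 2 ^ (k + 1) ≤ (p.2 : ℕ) * 2 ^ (k + 1) :=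
          Nat.mul_le_mul_right _ hj
        have hpos : 0 < 2 ^ ((p.1 : ℕ) + 1) := Nat.pow_pos (by norm_num)
        nlinarith
      omega
    · rintro ⟨h1, h2⟩
      refine ⟨by omega, ?_⟩
      show (p.2 : ℕ) * 2 ^ (k + 1) + 2 ^ ((p.1 : ℕ) + 1)
        ≤ (q.2 : ℕ) * 2 ^ (k + 1) + 2 ^ ((q.1 : ℕ) + 1)
      exact add_le_add (Nat.mul_le_mul_right _ h2)
        (Nat.pow_le_pow_right (by norm_num) (by omega))
  refine ⟨⟨⟨f, hinj⟩, ?_⟩, fun p => rfl⟩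
  intro p q
  simp only [Function.Embedding.coeFn_mk, Fgraph, Bgraph, fromRel_adj]
  constructor
  · rintro ⟨hne, h⟩
    refine ⟨fun h' => hne (by rw [h']), ?_⟩
    rcases h with h | h
    · exact Or.inl ((hrel p q).mp h)
    · exact Or.inr ((hrel q p).mp h)
  · rintro ⟨hne, h⟩
    refine ⟨fun h' => hne (hinj h'), ?_⟩
    rcases h with h | h
    · exact Or.inl ((hrel p q).mpr h)
    · exact Or.inr ((hrel q p).mpr h)
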